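/- Suppose λ: ℝ → ℝ satisfies λ(k) = E + C k^{2n−1} e^{−k²} (1 + r(k)) for large k, where C > 0, n ≥ 1, and r(k) = O(k^{−2}) as k → +∞, and λ is continuous, strictly decreasing with limit E at +∞. Define k(δ) by λ(k(δ)) = E + δ for small δ > 0. Then k(δ)² = |log δ| + ((2n−1)/2) log |log δ| + log C + o(1) as δ → 0⁺. -/

import Mathlib

open Filter Real Set

/-- Asymptotic inversion of the band-function asymptotics:
`k(δ)² = |log δ| + ((2n-1)/2) log |log δ| + log C + o(1)` as `δ → 0⁺`. -/
theorem stmt4 (f : ℝ → ℝ) (E C : ℝ) (hC : 0 < C) (n : ℕ) (hn : 1 ≤ n)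
    (r : ℝ → ℝ) (hr : Asymptotics.IsBigO Filter.atTop r (fun k : ℝ => k⁻¹ ^ 2))
    (hform : ∀ᶠ k in Filter.atTop,
      f k = E + C * k ^ (2 * n - 1) * Real.exp (-k ^ 2) * (1 + r k))
    (hcont : Continuous f) (hanti : StrictAnti f)
    (htop : Filter.Tendsto f Filter.atTop (nhds E))
    (k : ℝ → ℝ) (hk : ∀ᶠ δ in nhdsWithin 0 (Set.Ioi 0), f (k δ) = E + δ) :
    Filter.Tendsto
      (fun δ => k δ ^ 2 -
        (|Real.log δ| + ((2 * (n : ℝ) - 1) / 2) * Real.log |Real.log δ| + Real.log C))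
      (nhdsWithin 0 (Set.Ioi 0)) (nhds 0) := by
  set l := nhdsWithin (0:ℝ) (Set.Ioi 0) with hl
  set c : ℝ := (2 * (n : ℝ) - 1) / 2 with hcdef
  -- E < f x for all x
  have hEx : ∀ x : ℝ, E < f x := by
    intro x
    have h1 : E ≤ f (x + 1) :=
      le_of_tendsto htop (eventually_atTop.2 ⟨x + 1, fun y hy => hanti.antitone hy⟩)
    have h2 : f (x + 1) < f x := hanti (lt_add_one x)
    linarith
  -- k δ → ∞
  have hA : Tendsto k l atTop := by
    rw [tendsto_atTop]
    intro M
    have hM : (0:ℝ) < f M - E := sub_pos.2 (hEx M)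
    have hδ : ∀ᶠ δ in l, δ < f M - E :=
      Filter.Eventually.filter_mono nhdsWithin_le_nhds (Iio_mem_nhds hM)
    filter_upwards [hk, hδ] with δ hfk hlt
    have hlt2 : f (k δ) < f M := by rw [hfk]; linarith
    exact le_of_lt (hanti.lt_iff_gt.mp hlt2)
  have hg : Tendsto (fun δ => (k δ) ^ 2) l atTop :=
    (tendsto_pow_atTop (two_ne_zero)).comp hA
  -- r (k δ) → 0
  have hrk : Tendsto (fun δ => r (k δ)) l (nhds 0) := by
    have h0 : Tendsto (fun x : ℝ => x⁻¹ ^ 2) atTop (nhds 0) := by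
      simpa using (tendsto_inv_atTop_zero : Filter.Tendsto (fun x : ℝ => x⁻¹) atTop (nhds 0)).pow 2
    exact (hr.trans_tendsto h0).comp hA
  -- ε δ := log (1 + r (k δ)) → 0
  have hε : Tendsto (fun δ => Real.log (1 + r (k δ))) l (nhds 0) := by
    have h1 : Tendsto (fun δ => 1 + r (k δ)) l (nhds 1) := by
      simpa using tendsto_const_nhds.add hrk
    have h2 := (Real.continuousAt_log one_ne_zero).tendsto.comp h1
    simpa [Real.log_one, Function.comp_def] using h2
  -- eventual basic facts
  have hδ0 : ∀ᶠ δ in l, (0:ℝ) < δ := eventually_mem_nhdsWithin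
  have hδ1 : ∀ᶠ δ in l, δ < 1 :=
    Filter.Eventually.filter_mono nhdsWithin_le_nhds (Iio_mem_nhds one_pos)
  have hform' : ∀ᶠ δ in l,
      f (k δ) = E + C * (k δ) ^ (2 * n - 1) * Real.exp (-(k δ) ^ 2) * (1 + r (k δ)) :=
    hA.eventually hform
  have hk1 : ∀ᶠ δ in l, (1:ℝ) ≤ k δ := hA.eventually (eventually_ge_atTop 1)
  have hrsmall : ∀ᶠ δ in l, |r (k δ)| < 1 / 2 := by
    have h1 : ∀ᶠ x in nhds (0:ℝ), |x| < 1 / 2 := by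
      have h2 : Set.Ioo (-(1/2):ℝ) (1/2) ∈ nhds (0:ℝ) := Ioo_mem_nhds (by norm_num) (by norm_num)
      filter_upwards [h2] with x hx
      rw [abs_lt]; exact ⟨hx.1, hx.2⟩
    exact hrk.eventually h1
  -- key identity
  have key : ∀ᶠ δ in l, (k δ) ^ 2 =
      -Real.log δ + Real.log C + c * Real.log ((k δ) ^ 2) + Real.log (1 + r (k δ)) := by
    filter_upwards [hk, hform', hk1, hrsmall, hδ0] with δ h1 h2 h3 h4 h5
    have hkpos : (0:ℝ) < k δ := lt_of_lt_of_le one_pos h3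
    have hrpos : (0:ℝ) < 1 + r (k δ) := by
      have := abs_lt.mp h4; linarith
    have hδeq : δ = C * (k δ) ^ (2 * n - 1) * Real.exp (-(k δ) ^ 2) * (1 + r (k δ)) := by
      have := h1.symm.trans h2; linarith
    have hne1 : C * (k δ) ^ (2 * n - 1) ≠ 0 := by positivity
    have hne2 : C * (k δ) ^ (2 * n - 1) * Real.exp (-(k δ) ^ 2) ≠ 0 := by positivity
    have hlog : Real.log δ = Real.log C + ((2 * n - 1 : ℕ) : ℝ) * Real.log (k δ)
        + (-(k δ) ^ 2) + Real.log (1 + r (k δ)) := by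
      have h0 := congrArg Real.log hδeq
      rw [Real.log_mul hne2 (ne_of_gt hrpos), Real.log_mul hne1 (Real.exp_ne_zero _),
        Real.log_mul (ne_of_gt hC) (by positivity), Real.log_pow, Real.log_exp] at h0
      linarith [h0]
    have hcast : ((2 * n - 1 : ℕ) : ℝ) = 2 * (n : ℝ) - 1 := by
      rw [Nat.cast_sub (by omega)]; push_cast; ring
    have hlogk2 : Real.log ((k δ) ^ 2) = 2 * Real.log (k δ) := by
      rw [Real.log_pow]; push_cast; ring
    rw [hcast] at hlog
    rw [hlogk2, hcdef]
    linear_combination hlog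
  -- (−log δ) / k² → 1
  have hLg : Tendsto (fun δ => (-Real.log δ) / (k δ) ^ 2) l (nhds 1) := by
    have h1 : Tendsto (fun δ => Real.log C / (k δ) ^ 2) l (nhds 0) :=
      tendsto_const_nhds.div_atTop hg
    have h2 : Tendsto (fun δ => Real.log ((k δ) ^ 2) / (k δ) ^ 2) l (nhds 0) :=
      (Real.isLittleO_log_id_atTop.tendsto_div_nhds_zero).comp hg
    have h3 : Tendsto (fun δ => Real.log (1 + r (k δ)) / (k δ) ^ 2) l (nhds 0) :=
      hε.div_atTop hg
    have h4 : Tendsto (fun δ => 1 - Real.log C / (k δ) ^ 2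
        - c * (Real.log ((k δ) ^ 2) / (k δ) ^ 2)
        - Real.log (1 + r (k δ)) / (k δ) ^ 2) l (nhds (1 - 0 - c * 0 - 0)) :=
      ((tendsto_const_nhds.sub h1).sub (h2.const_mul c)).sub h3
    have h4' : Tendsto (fun δ => 1 - Real.log C / (k δ) ^ 2
        - c * (Real.log ((k δ) ^ 2) / (k δ) ^ 2)
        - Real.log (1 + r (k δ)) / (k δ) ^ 2) l (nhds 1) := by simpa using h4
    refine h4'.congr' ?_
    filter_upwards [key, hk1] with δ hkey h3'
    have hgpos : (0:ℝ) < (k δ) ^ 2 := by positivity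
    have hL : -Real.log δ = (k δ) ^ 2 - Real.log C - c * Real.log ((k δ) ^ 2)
        - Real.log (1 + r (k δ)) := by linarith
    rw [hL]
    field_simp
  -- log(k²) − log(−log δ) → 0
  have hloggap : Tendsto (fun δ => Real.log ((k δ) ^ 2) - Real.log (-Real.log δ)) l (nhds 0) := by
    have hcont1 : Tendsto (fun δ => Real.log ((-Real.log δ) / (k δ) ^ 2)) l (nhds 0) := by
      have := (Real.continuousAt_log one_ne_zero).tendsto.comp hLg
      simpa [Real.log_one, Function.comp_def] using this
    have heq : ∀ᶠ δ in l, Real.log ((-Real.log δ) / (k δ) ^ 2)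
        = Real.log (-Real.log δ) - Real.log ((k δ) ^ 2) := by
      filter_upwards [hδ0, hδ1, hk1] with δ h0 h1 h2
      have hlneg : Real.log δ < 0 := Real.log_neg h0 h1
      have hkpos : (0:ℝ) < k δ := lt_of_lt_of_le one_pos h2
      exact Real.log_div (by linarith) (by positivity)
    have h5 : Tendsto (fun δ => Real.log (-Real.log δ) - Real.log ((k δ) ^ 2)) l (nhds 0) :=
      hcont1.congr' heq
    have := h5.neg
    simpa [neg_sub] using this
  -- conclusion
  have hfinal : Tendsto (fun δ => c * (Real.log ((k δ) ^ 2) - Real.log (-Real.log δ))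
      + Real.log (1 + r (k δ))) l (nhds 0) := by
    simpa using (hloggap.const_mul c).add hε
  refine hfinal.congr' ?_
  filter_upwards [key, hδ0, hδ1] with δ hkey h0 h1
  have hlneg : Real.log δ < 0 := Real.log_neg h0 h1
  have habs : |Real.log δ| = -Real.log δ := abs_of_neg hlneg
  rw [habs]
  linear_combination -hkey
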